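/- The graph-valued invariant Γ of a framed 4-valent graph L — vertices = unicursal components, an edge between two vertices iff the corresponding components share an odd number of intersection points (vertices of L) — is invariant under second and third Reidemeister moves applied to L. -/

import Mathlib

/-- The graph `Γ(L)` of a framed 4-valent graph `L`, encoded as a Gauss diagram
on `k` circles: points of the circles are natural numbers, `circleOf` assigns
each point to its circle (unicursal component), and `D` is the set of chords
(each chord an unordered pair of points, recorded as an ordered pair).  The
vertices of `Γ` are the `k` components, and two distinct components are
adjacent iff they share an odd number of chords (intersection points). -/
def gammaGraph (k : ℕ) (circleOf : ℕ → Fin k) (D : Finset (ℕ × ℕ)) :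
    SimpleGraph (Fin k) where
  Adj i j := i ≠ j ∧ Odd ((D.filter fun c =>
      (circleOf c.1 = i ∧ circleOf c.2 = j) ∨
      (circleOf c.1 = j ∧ circleOf c.2 = i)).card)
  symm := by
    constructor
    intro i j hij
    refine ⟨hij.1.symm, ?_⟩
    have heq : (D.filter fun c =>
        (circleOf c.1 = i ∧ circleOf c.2 = j) ∨
        (circleOf c.1 = j ∧ circleOf c.2 = i)) =
      (D.filter fun c =>
        (circleOf c.1 = j ∧ circleOf c.2 = i) ∨
        (circleOf c.1 = i ∧ circleOf c.2 = j)) := by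
      apply Finset.filter_congr
      intro c _
      tauto
    rw [← heq]
    exact hij.2
  loopless := ⟨fun i hi => hi.1 rfl⟩

private lemma pair_iff {k : ℕ} {i j x y : Fin k} (hij : i ≠ j) :
    ((x = i ∧ y = j) ∨ (x = j ∧ y = i)) ↔ ({x, y} : Finset (Fin k)) = {i, j} := by
  constructor
  · rintro (⟨rfl, rfl⟩ | ⟨rfl, rfl⟩)
    · rfl
    · exact Finset.pair_comm _ _
  · intro h
    have hx : x ∈ ({i, j} : Finset (Fin k)) := by rw [← h]; simp
    have hy : y ∈ ({i, j} : Finset (Fin k)) := by rw [← h]; simp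
    have hj : j ∈ ({x, y} : Finset (Fin k)) := by rw [h]; simp
    have hi : i ∈ ({x, y} : Finset (Fin k)) := by rw [h]; simp
    simp only [Finset.mem_insert, Finset.mem_singleton] at hx hy hi hj
    rcases hx with rfl | rfl <;> rcases hy with rfl | rfl <;> tauto

/-- The graph `Γ(L)` is invariant under second and third Reidemeister moves:
(a) an R2 move adds/removes two chords joining the same pair of circles, so it
changes each pairwise intersection count by 0 or 2 and does not change `Γ`;
(b) an R3 move replaces three chords by three chords joining the same circles,
so it does not change `Γ`. -/
theorem stmt_15 (k : ℕ) (circleOf : ℕ → Fin k) :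
    (∀ (D : Finset (ℕ × ℕ)) (c1 c2 : ℕ × ℕ), c1 ∉ D → c2 ∉ D → c1 ≠ c2 →
      ({circleOf c1.1, circleOf c1.2} : Finset (Fin k)) =
        ({circleOf c2.1, circleOf c2.2} : Finset (Fin k)) →
      gammaGraph k circleOf (insert c1 (insert c2 D)) = gammaGraph k circleOf D) ∧
    (∀ (D0 : Finset (ℕ × ℕ)) (a a' : Fin 3 → ℕ × ℕ),
      Function.Injective a → Function.Injective a' →
      (∀ l, a l ∉ D0) → (∀ l, a' l ∉ D0) →
      (∀ l, circleOf (a l).1 = circleOf (a' l).1 ∧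
            circleOf (a l).2 = circleOf (a' l).2) →
      gammaGraph k circleOf (D0 ∪ Finset.univ.image a) =
        gammaGraph k circleOf (D0 ∪ Finset.univ.image a')) := by
  constructor
  · intro D c1 c2 h1 h2 h12 hpair
    ext i j
    simp only [gammaGraph]
    refine and_congr_right fun hij => ?_
    set P : ℕ × ℕ → Prop := fun c =>
      (circleOf c.1 = i ∧ circleOf c.2 = j) ∨
      (circleOf c.1 = j ∧ circleOf c.2 = i) with hP
    have hPiff : P c1 ↔ P c2 := by
      rw [hP]
      simp only
      rw [pair_iff hij, pair_iff hij, hpair]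
    have h1' : c1 ∉ insert c2 D := by simp [h12, h1]
    by_cases hc : P c1
    · rw [Finset.filter_insert, if_pos hc, Finset.filter_insert,
        if_pos (hPiff.mp hc), Finset.card_insert_of_notMem (by
          simp only [Finset.mem_insert, Finset.mem_filter]; tauto),
        Finset.card_insert_of_notMem (by simp [Finset.mem_filter, h2])]
      simp [Nat.odd_add]
    · rw [Finset.filter_insert, if_neg hc, Finset.filter_insert,
        if_neg (fun h => hc (hPiff.mpr h))]
  · intro D0 a a' ha ha' hd hd' hcirc
    ext i j
    simp only [gammaGraph]
    refine and_congr_right fun hij => ?_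
    set P : ℕ × ℕ → Prop := fun c =>
      (circleOf c.1 = i ∧ circleOf c.2 = j) ∨
      (circleOf c.1 = j ∧ circleOf c.2 = i) with hP
    have key : ∀ (b : Fin 3 → ℕ × ℕ), Function.Injective b → (∀ l, b l ∉ D0) →
        ((D0 ∪ Finset.univ.image b).filter P).card =
          (D0.filter P).card + ((Finset.univ : Finset (Fin 3)).filter
            fun l => P (b l)).card := by
      intro b hb hbd
      rw [Finset.filter_union, Finset.card_union_of_disjoint, Finset.filter_image,
        Finset.card_image_of_injective _ hb]
      · exact Finset.disjoint_left.mpr fun c hc hc' => by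
          simp only [Finset.mem_filter, Finset.mem_image] at hc hc'
          obtain ⟨⟨l, _, rfl⟩, _⟩ := hc'
          exact hbd l hc.1
    rw [key a ha hd, key a' ha' hd']
    have : (Finset.univ : Finset (Fin 3)).filter (fun l => P (a l)) =
        (Finset.univ : Finset (Fin 3)).filter (fun l => P (a' l)) := by
      apply Finset.filter_congr
      intro l _
      simp only [hP, (hcirc l).1, (hcirc l).2]
    rw [this]
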